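/- Let (v_0,v_1,v_2,v_3) and (u_0,u_1,u_2,u_3) be two simple quadrilaterals in ℝ² with equal corresponding edge lengths (‖v_{(i+1) mod 4} − v_i‖ = ‖u_{(i+1) mod 4} − u_i‖ for all i), each reflex at its third vertex (v_2 in the interior of triangle v_0 v_1 v_3, u_2 in the interior of triangle u_0 u_1 u_3). Then the length of the interior diagonal increases if and only if the length of the exterior diagonal increases: ‖v_2 − v_0‖ < ‖u_2 − u_0‖ if and only if ‖v_3 − v_1‖ < ‖u_3 − u_1‖. -/

import Mathlib

set_option maxHeartbeats 1600000


open scoped EuclideanGeometry RealInnerProductSpace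

noncomputable section

abbrev E2 : Type := EuclideanSpace ℝ (Fin 2)
abbrev E3 : Type := EuclideanSpace ℝ (Fin 3)

/-- Simplicity of a closed polygonal chain with vertices `v 0, …, v (n-1)`
and edges `[v i, v ((i+1) % n)]`. -/
def IsSimpleClosedChain {E : Type*} [NormedAddCommGroup E] [NormedSpace ℝ E]
    (n : ℕ) (v : ℕ → E) : Prop :=
  (∀ i < n, ∀ j < n, i ≠ j → (i + 1) % n ≠ j → (j + 1) % n ≠ i →
    Disjoint (segment ℝ (v i) (v ((i+1) % n))) (segment ℝ (v j) (v ((j+1) % n)))) ∧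
  ∀ i < n, segment ℝ (v i) (v ((i+1) % n)) ∩
      segment ℝ (v ((i+1) % n)) (v ((i+2) % n)) = {v ((i+1) % n)}

/-- A motion of a closed chain: continuous on `[0,1]`, starting at `v`,
preserving all edge lengths and simplicity. -/
def IsClosedChainMotion {E : Type*} [NormedAddCommGroup E] [NormedSpace ℝ E]
    (n : ℕ) (v : ℕ → E) (f : ℝ → ℕ → E) : Prop :=
  (∀ i < n, ContinuousOn (fun t => f t i) (Set.Icc (0:ℝ) 1)) ∧
  (∀ i < n, f 0 i = v i) ∧
  (∀ t ∈ Set.Icc (0:ℝ) 1, ∀ i < n,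
    dist (f t ((i+1) % n)) (f t i) = dist (v ((i+1) % n)) (v i)) ∧
  (∀ t ∈ Set.Icc (0:ℝ) 1, IsSimpleClosedChain n (f t))

/-- A simple quadrilateral `(v 0, v 1, v 2, v 3)` that is reflex at `v 2`:
`v 2` lies in the interior of the triangle `v 0 v 1 v 3`. -/
def SimpleReflexQuad (v : ℕ → E2) : Prop :=
  IsSimpleClosedChain 4 v ∧ v 2 ∈ interior (convexHull ℝ ({v 0, v 1, v 3} : Set E2))

/-- For two simple quadrilaterals with equal corresponding
edge lengths, each reflex at its third vertex, the interior diagonal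
`[v 0, v 2]` is shorter in the first exactly when the exterior diagonal
`[v 1, v 3]` is shorter in the first. -/
lemma halfspace_pos (S : Set E2) (P : E2) (d0 d1 c : ℝ) (hd : d0 ≠ 0 ∨ d1 ≠ 0)
    (hS : ∀ x ∈ S, 0 ≤ d0 * x 0 + d1 * x 1 + c)
    (hP : P ∈ interior (convexHull ℝ S)) :
    0 < d0 * P 0 + d1 * P 1 + c := by
  set n : E2 := !₂[d0, d1] with hn
  have hn0 : n 0 = d0 := rfl
  have hn1 : n 1 = d1 := rfl
  have hnne : ‖n‖ ≠ 0 := by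
    simp only [norm_ne_zero_iff]
    intro h
    rcases hd with h0 | h0 <;> [exact h0 (by rw [← hn0, h]; rfl); exact h0 (by rw [← hn1, h]; rfl)]
  have hnpos : 0 < ‖n‖ := lt_of_le_of_ne (norm_nonneg n) (Ne.symm hnne)
  have hconv : Convex ℝ {x : E2 | 0 ≤ d0 * x 0 + d1 * x 1 + c} := by
    intro x hx y hy a b ha hb hab
    simp only [Set.mem_setOf_eq] at *
    have hax : (a • x + b • y) 0 = a * x 0 + b * y 0 := rfl
    have hay : (a • x + b • y) 1 = a * x 1 + b * y 1 := rfl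
    rw [hax, hay]
    have key : d0 * (a * x 0 + b * y 0) + d1 * (a * x 1 + b * y 1) + c
        = a * (d0 * x 0 + d1 * x 1 + c) + b * (d0 * y 0 + d1 * y 1 + c) := by
      linear_combination (-c) * hab
    rw [key]
    exact add_nonneg (mul_nonneg ha hx) (mul_nonneg hb hy)
  have hhull : convexHull ℝ S ⊆ {x : E2 | 0 ≤ d0 * x 0 + d1 * x 1 + c} :=
    convexHull_min hS hconv
  obtain ⟨ε, hε, hball⟩ := Metric.mem_nhds_iff.mp (mem_interior_iff_mem_nhds.mp hP)
  set z : E2 := P - (ε / (2 * ‖n‖)) • n with hz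
  have hzball : z ∈ Metric.ball P ε := by
    rw [Metric.mem_ball, dist_eq_norm, hz]
    have h1 : P - (ε / (2 * ‖n‖)) • n - P = -((ε / (2 * ‖n‖)) • n) := by abel
    rw [h1, norm_neg, norm_smul, Real.norm_eq_abs, abs_of_pos (by positivity)]
    rw [div_mul_eq_mul_div, mul_comm (2:ℝ) ‖n‖, ← div_div, mul_div_assoc]
    rw [div_self hnne, mul_one]
    linarith
  have hzS : 0 ≤ d0 * z 0 + d1 * z 1 + c := hhull (hball hzball)
  have hz0 : z 0 = P 0 - (ε / (2 * ‖n‖)) * d0 := by rw [hz]; rfl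
  have hz1 : z 1 = P 1 - (ε / (2 * ‖n‖)) * d1 := by rw [hz]; rfl
  rw [hz0, hz1] at hzS
  have hnormsq : d0 ^ 2 + d1 ^ 2 = ‖n‖ ^ 2 := by
    rw [EuclideanSpace.norm_eq, Real.sq_sqrt (by positivity)]
    simp [Fin.sum_univ_two, hn0, hn1, sq_abs]
  have hpos : 0 < (ε / (2 * ‖n‖)) * (d0 ^ 2 + d1 ^ 2) := by
    rw [hnormsq]; positivity
  nlinarith

lemma cross_side (S : Set E2) (P A : E2) (w0 w1 : ℝ) (hw : ¬(w0 = 0 ∧ w1 = 0))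
    (hS : ∀ x ∈ S, 0 ≤ w0*(x 0 - A 0) + w1*(x 1 - A 1))
    (hP : P ∈ interior (convexHull ℝ S)) : 0 < w0*(P 0 - A 0) + w1*(P 1 - A 1) := by
  have hd : w0 ≠ 0 ∨ w1 ≠ 0 := by tauto
  have h := halfspace_pos S P w0 w1 (-(w0*A 0) - w1*A 1) hd (fun x hx => by
    have := hS x hx; linarith [this]) hP
  linarith [h]

lemma dist_sq_coord (x y : E2) : dist x y ^ 2 = (x 0 - y 0)^2 + (x 1 - y 1)^2 := by
  rw [EuclideanSpace.dist_eq, Real.sq_sqrt (by positivity)]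
  simp [Fin.sum_univ_two, Real.dist_eq, sq_abs]

lemma quad_data (v : ℕ → E2) (hv : SimpleReflexQuad v) :
    ∃ x1 x3 y1 y3 : ℝ,
    0 < dist (v 2) (v 0)^2 ∧
    dist (v 1) (v 0)^2 * dist (v 2) (v 0)^2 = x1^2+y1^2 ∧
    dist (v 2) (v 1)^2 * dist (v 2) (v 0)^2 = (x1-dist (v 2) (v 0)^2)^2+y1^2 ∧
    dist (v 0) (v 3)^2 * dist (v 2) (v 0)^2 = x3^2+y3^2 ∧
    dist (v 3) (v 2)^2 * dist (v 2) (v 0)^2 = (x3-dist (v 2) (v 0)^2)^2+y3^2 ∧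
    dist (v 3) (v 1)^2 * dist (v 2) (v 0)^2 = (x1-x3)^2+(y1-y3)^2 ∧
    y1*y3 < 0 ∧ y1*(x1*y3-x3*y1) < 0 ∧
    (x1*y3-x3*y1)*(dist (v 2) (v 0)^2*(y1-y3)+(x1*y3-x3*y1)) > 0 := by
  obtain ⟨hsimp, hint⟩ := hv
  -- v 2 ≠ v 0
  have hd13 : Disjoint (segment ℝ (v 1) (v 2)) (segment ℝ (v 3) (v 0)) := by
    have := hsimp.1 1 (by norm_num) 3 (by norm_num) (by norm_num) (by norm_num) (by norm_num)
    norm_num at this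
    exact this
  have h20 : v 2 ≠ v 0 := by
    intro heq
    have h1 : v 2 ∈ segment ℝ (v 1) (v 2) := right_mem_segment ℝ _ _
    have h2 : v 2 ∈ segment ℝ (v 3) (v 0) := heq ▸ right_mem_segment ℝ _ _
    exact Set.disjoint_left.mp hd13 h1 h2
  have hd02 : Disjoint (segment ℝ (v 0) (v 1)) (segment ℝ (v 2) (v 3)) := by
    have := hsimp.1 0 (by norm_num) 2 (by norm_num) (by norm_num) (by norm_num) (by norm_num)
    norm_num at this
    exact this
  have h31 : v 3 ≠ v 1 := by
    intro heq
    have h1 : v 1 ∈ segment ℝ (v 0) (v 1) := right_mem_segment ℝ _ _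
    have h2 : v 1 ∈ segment ℝ (v 2) (v 3) := heq ▸ right_mem_segment ℝ _ _
    exact Set.disjoint_left.mp hd02 h1 h2
  -- coordinates
  obtain ⟨E0, hE0⟩ : ∃ t : ℝ, t = v 2 0 - v 0 0 := ⟨_, rfl⟩
  obtain ⟨E1, hE1⟩ : ∃ t : ℝ, t = v 2 1 - v 0 1 := ⟨_, rfl⟩
  have hE : ¬(E0 = 0 ∧ E1 = 0) := by
    rintro ⟨he0, he1⟩
    apply h20
    ext i
    fin_cases i
    · have := hE0 ▸ he0; dsimp at *; linarith [this]
    · have := hE1 ▸ he1; dsimp at *; linarith [this]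
  obtain ⟨b0, hb0⟩ : ∃ t : ℝ, t = v 1 0 - v 0 0 := ⟨_, rfl⟩
  obtain ⟨b1, hb1⟩ : ∃ t : ℝ, t = v 1 1 - v 0 1 := ⟨_, rfl⟩
  obtain ⟨a0, ha0⟩ : ∃ t : ℝ, t = v 3 0 - v 0 0 := ⟨_, rfl⟩
  obtain ⟨a1, ha1⟩ : ∃ t : ℝ, t = v 3 1 - v 0 1 := ⟨_, rfl⟩
  have hspos : 0 < E0^2 + E1^2 := by
    rcases not_and_or.mp hE with h | h
    · nlinarith [mul_self_pos.mpr h, sq_nonneg E1]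
    · nlinarith [mul_self_pos.mpr h, sq_nonneg E0]
  -- condition (1)
  have hyy : (E0*b1 - E1*b0) * (E0*a1 - E1*a0) < 0 := by
    by_contra hcon; push_neg at hcon
    rcases mul_nonneg_iff.mp hcon with ⟨hy1, hy3⟩ | ⟨hy1, hy3⟩
    · have hc := cross_side {v 0, v 1, v 3} (v 2) (v 0) (-E1) E0
        (by rintro ⟨p1, p2⟩; exact hE ⟨p2, by linarith [neg_eq_zero.mp p1]⟩)
        (by
          intro x hx
          simp only [Set.mem_insert_iff, Set.mem_singleton_iff] at hx
          rcases hx with rfl | rfl | rfl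
          · have h0 : -E1*(v 0 0 - v 0 0) + E0*(v 0 1 - v 0 1) = 0 := by ring
            linarith
          · linarith [show -E1*(v 1 0 - v 0 0) + E0*(v 1 1 - v 0 1)
              = E0*b1 - E1*b0 from by rw [hb0, hb1]; ring, hy1]
          · linarith [show -E1*(v 3 0 - v 0 0) + E0*(v 3 1 - v 0 1)
              = E0*a1 - E1*a0 from by rw [ha0, ha1]; ring, hy3]) hint
      rw [← hE0, ← hE1] at hc
      have h0 : -E1*E0 + E0*E1 = 0 := by ring
      linarith
    · have hc := cross_side {v 0, v 1, v 3} (v 2) (v 0) E1 (-E0)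
        (by rintro ⟨p1, p2⟩; exact hE ⟨by linarith [neg_eq_zero.mp p2], p1⟩)
        (by
          intro x hx
          simp only [Set.mem_insert_iff, Set.mem_singleton_iff] at hx
          rcases hx with rfl | rfl | rfl
          · have h0 : E1*(v 0 0 - v 0 0) + -E0*(v 0 1 - v 0 1) = 0 := by ring
            linarith
          · linarith [show E1*(v 1 0 - v 0 0) + -E0*(v 1 1 - v 0 1)
              = -(E0*b1 - E1*b0) from by rw [hb0, hb1]; ring, hy1]
          · linarith [show E1*(v 3 0 - v 0 0) + -E0*(v 3 1 - v 0 1)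
              = -(E0*a1 - E1*a0) from by rw [ha0, ha1]; ring, hy3]) hint
      rw [← hE0, ← hE1] at hc
      have h0 : E1*E0 + -E0*E1 = 0 := by ring
      linarith
  have hy1ne : E0*b1 - E1*b0 ≠ 0 := by
    intro h; rw [h, zero_mul] at hyy; exact absurd hyy (lt_irrefl 0)
  have hbne : ¬(b0 = 0 ∧ b1 = 0) := by
    rintro ⟨r0, r1⟩; apply hy1ne; rw [r0, r1]; ring
  -- condition (3)
  have hyM : (E0*b1 - E1*b0) *
      ((b0*E0 + b1*E1)*(E0*a1 - E1*a0) - (a0*E0 + a1*E1)*(E0*b1 - E1*b0)) < 0 := by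
    by_contra hcon; push_neg at hcon
    have hMid : (b0*E0 + b1*E1)*(E0*a1 - E1*a0) - (a0*E0 + a1*E1)*(E0*b1 - E1*b0)
        = (E0^2 + E1^2)*(b0*a1 - b1*a0) := by ring
    rcases mul_nonneg_iff.mp hcon with ⟨hy1, hM⟩ | ⟨hy1, hM⟩
    · have hL3 : 0 ≤ b0*a1 - b1*a0 := by
        rw [hMid] at hM
        by_contra hneg; push_neg at hneg
        nlinarith [mul_pos hspos (neg_pos.mpr hneg)]
      have hc := cross_side {v 0, v 1, v 3} (v 2) (v 0) (-b1) b0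
        (by rintro ⟨p1, p2⟩; exact hbne ⟨p2, by linarith [neg_eq_zero.mp p1]⟩)
        (by
          intro x hx
          simp only [Set.mem_insert_iff, Set.mem_singleton_iff] at hx
          rcases hx with rfl | rfl | rfl
          · have h0 : -b1*(v 0 0 - v 0 0) + b0*(v 0 1 - v 0 1) = 0 := by ring
            linarith
          · linarith [show -b1*(v 1 0 - v 0 0) + b0*(v 1 1 - v 0 1)
              = 0 from by rw [← hb0, ← hb1]; ring]
          · linarith [show -b1*(v 3 0 - v 0 0) + b0*(v 3 1 - v 0 1)
              = b0*a1 - b1*a0 from by rw [← ha0, ← ha1]; ring, hL3]) hint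
      rw [← hE0, ← hE1] at hc
      linarith [show -b1*E0 + b0*E1 = -(E0*b1 - E1*b0) from by ring, hy1]
    · have hL3 : b0*a1 - b1*a0 ≤ 0 := by
        rw [hMid] at hM
        by_contra hneg; push_neg at hneg
        nlinarith [mul_pos hspos hneg]
      have hc := cross_side {v 0, v 1, v 3} (v 2) (v 0) b1 (-b0)
        (by rintro ⟨p1, p2⟩; exact hbne ⟨by linarith [neg_eq_zero.mp p2], p1⟩)
        (by
          intro x hx
          simp only [Set.mem_insert_iff, Set.mem_singleton_iff] at hx
          rcases hx with rfl | rfl | rfl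
          · have h0 : b1*(v 0 0 - v 0 0) + -b0*(v 0 1 - v 0 1) = 0 := by ring
            linarith
          · linarith [show b1*(v 1 0 - v 0 0) + -b0*(v 1 1 - v 0 1)
              = 0 from by rw [← hb0, ← hb1]; ring]
          · linarith [show b1*(v 3 0 - v 0 0) + -b0*(v 3 1 - v 0 1)
              = -(b0*a1 - b1*a0) from by rw [← ha0, ← ha1]; ring, hL3]) hint
      rw [← hE0, ← hE1] at hc
      linarith [show b1*E0 + -b0*E1 = E0*b1 - E1*b0 from by ring, hy1]
  -- v 3 ≠ v 1 in coordinates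
  have habne : ¬(a0 - b0 = 0 ∧ a1 - b1 = 0) := by
    rintro ⟨r0, r1⟩
    apply h31
    have e0 : v 3 0 - v 1 0 = a0 - b0 := by rw [ha0, hb0]; ring
    have e1 : v 3 1 - v 1 1 = a1 - b1 := by rw [ha1, hb1]; ring
    ext i
    fin_cases i
    · dsimp; rw [r0] at e0; linarith [e0]
    · dsimp; rw [r1] at e1; linarith [e1]
  -- condition (2)
  have hMW : ((b0*E0 + b1*E1)*(E0*a1 - E1*a0) - (a0*E0 + a1*E1)*(E0*b1 - E1*b0)) *
      ((E0^2 + E1^2)*((E0*b1 - E1*b0) - (E0*a1 - E1*a0)) +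
        ((b0*E0 + b1*E1)*(E0*a1 - E1*a0) - (a0*E0 + a1*E1)*(E0*b1 - E1*b0))) > 0 := by
    by_contra hcon; push_neg at hcon
    have hMid : (b0*E0 + b1*E1)*(E0*a1 - E1*a0) - (a0*E0 + a1*E1)*(E0*b1 - E1*b0)
        = (E0^2 + E1^2)*(b0*a1 - b1*a0) := by ring
    have e20 : v 2 0 - v 1 0 = E0 - b0 := by rw [hE0, hb0]; ring
    have e21 : v 2 1 - v 1 1 = E1 - b1 := by rw [hE1, hb1]; ring
    have e30 : v 3 0 - v 1 0 = a0 - b0 := by rw [ha0, hb0]; ring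
    have e31 : v 3 1 - v 1 1 = a1 - b1 := by rw [ha1, hb1]; ring
    have e00 : v 0 0 - v 1 0 = -b0 := by rw [hb0]; ring
    have e01 : v 0 1 - v 1 1 = -b1 := by rw [hb1]; ring
    rcases mul_nonpos_iff.mp hcon with ⟨hM, hS2⟩ | ⟨hM, hS2⟩
    · have hL0 : 0 ≤ b0*a1 - b1*a0 := by
        rw [hMid] at hM
        by_contra hneg; push_neg at hneg
        nlinarith [mul_pos hspos (neg_pos.mpr hneg)]
      have hc := cross_side {v 0, v 1, v 3} (v 2) (v 1) (-(a1-b1)) (a0-b0)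
        (by rintro ⟨p1, p2⟩; exact habne ⟨p2, by linarith [neg_eq_zero.mp p1]⟩)
        (by
          intro x hx
          simp only [Set.mem_insert_iff, Set.mem_singleton_iff] at hx
          rcases hx with rfl | rfl | rfl
          · linarith [show -(a1-b1)*(v 0 0 - v 1 0) + (a0-b0)*(v 0 1 - v 1 1)
              = b0*a1 - b1*a0 from by rw [e00, e01]; ring, hL0]
          · have h0 : -(a1-b1)*(v 1 0 - v 1 0) + (a0-b0)*(v 1 1 - v 1 1) = 0 := by ring
            linarith
          · linarith [show -(a1-b1)*(v 3 0 - v 1 0) + (a0-b0)*(v 3 1 - v 1 1)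
              = 0 from by rw [e30, e31]; ring]) hint
      rw [e20, e21] at hc
      have hkey : (E0^2+E1^2) * (-(a1-b1)*(E0-b0) + (a0-b0)*(E1-b1))
          = (E0^2 + E1^2)*((E0*b1 - E1*b0) - (E0*a1 - E1*a0)) +
            ((b0*E0 + b1*E1)*(E0*a1 - E1*a0) - (a0*E0 + a1*E1)*(E0*b1 - E1*b0)) := by
        ring
      nlinarith [mul_pos hspos hc]
    · have hL0 : b0*a1 - b1*a0 ≤ 0 := by
        rw [hMid] at hM
        by_contra hneg; push_neg at hneg
        nlinarith [mul_pos hspos hneg]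
      have hc := cross_side {v 0, v 1, v 3} (v 2) (v 1) (a1-b1) (-(a0-b0))
        (by rintro ⟨p1, p2⟩; exact habne ⟨by linarith [neg_eq_zero.mp p2], p1⟩)
        (by
          intro x hx
          simp only [Set.mem_insert_iff, Set.mem_singleton_iff] at hx
          rcases hx with rfl | rfl | rfl
          · linarith [show (a1-b1)*(v 0 0 - v 1 0) + -(a0-b0)*(v 0 1 - v 1 1)
              = -(b0*a1 - b1*a0) from by rw [e00, e01]; ring, hL0]
          · have h0 : (a1-b1)*(v 1 0 - v 1 0) + -(a0-b0)*(v 1 1 - v 1 1) = 0 := by ring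
            linarith
          · linarith [show (a1-b1)*(v 3 0 - v 1 0) + -(a0-b0)*(v 3 1 - v 1 1)
              = 0 from by rw [e30, e31]; ring]) hint
      rw [e20, e21] at hc
      have hkey : (E0^2+E1^2) * ((a1-b1)*(E0-b0) + -(a0-b0)*(E1-b1))
          = -((E0^2 + E1^2)*((E0*b1 - E1*b0) - (E0*a1 - E1*a0)) +
            ((b0*E0 + b1*E1)*(E0*a1 - E1*a0) - (a0*E0 + a1*E1)*(E0*b1 - E1*b0))) := by
        ring
      nlinarith [mul_pos hspos hc]
  have hs2 : dist (v 2) (v 0)^2 = E0^2 + E1^2 := by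
    rw [dist_sq_coord, hE0, hE1]
  refine ⟨b0*E0 + b1*E1, a0*E0 + a1*E1,
          E0*b1 - E1*b0, E0*a1 - E1*a0, ?_, ?_, ?_, ?_, ?_, ?_, hyy, hyM, ?_⟩
  · have := dist_pos.mpr h20
    positivity
  · rw [dist_sq_coord, dist_sq_coord, hE0, hE1, hb0, hb1]; ring
  · rw [dist_sq_coord, dist_sq_coord, hE0, hE1, hb0, hb1]; ring
  · rw [dist_sq_coord, dist_sq_coord, hE0, hE1, ha0, ha1]; ring
  · rw [dist_sq_coord, dist_sq_coord, hE0, hE1, ha0, ha1]; ring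
  · rw [dist_sq_coord, dist_sq_coord, hE0, hE1, ha0, ha1, hb0, hb1]; ring
  · rw [hs2]; exact hMW

namespace RScalar


def fY (m α σ : ℝ) : ℝ := m * σ - ((σ + α)/2)^2

def fW (a2 α d2 β σ : ℝ) : ℝ :=
  (σ - α)/2 * Real.sqrt (fY d2 β σ) + (σ - β)/2 * Real.sqrt (fY a2 α σ)

def fQ (a2 α d2 β σ : ℝ) : ℝ :=
  a2 + d2 - (σ + α) * (σ + β) / (2 * σ) + 2 * Real.sqrt (fY a2 α σ * fY d2 β σ) / σ

def Dset (a2 α d2 β : ℝ) : Set ℝ :=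
  {σ | 0 < fY a2 α σ ∧ 0 < fY d2 β σ ∧ fW a2 α d2 β σ < 0}

lemma sigma_pos {a2 α σ : ℝ} (ha2 : 0 < a2) (h : 0 < fY a2 α σ) : 0 < σ := by
  unfold fY at h
  nlinarith [sq_nonneg ((σ + α)/2)]

lemma fW_swap (a2 α d2 β σ : ℝ) : fW a2 α d2 β σ = fW d2 β a2 α σ := by
  unfold fW; ring

lemma fQ_swap (a2 α d2 β σ : ℝ) : fQ a2 α d2 β σ = fQ d2 β a2 α σ := by
  unfold fQ; rw [mul_comm (fY a2 α σ)]; ring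

/-- squaring a strict inequality between `x·√Y` and `y·√X` with `0 ≤ x`. -/
lemma sq_ineq_fwd {x y X Y : ℝ} (hx : 0 ≤ x) (hX : 0 ≤ X) (hY : 0 ≤ Y)
    (h : x * Real.sqrt Y < y * Real.sqrt X) : x^2 * Y < y^2 * X := by
  have h1 := mul_self_lt_mul_self (mul_nonneg hx (Real.sqrt_nonneg Y)) h
  nlinarith only [h1, Real.sq_sqrt hX, Real.sq_sqrt hY]

lemma sq_ineq_bwd {x y X Y : ℝ} (hy : 0 < y) (hX : 0 < X) (hY : 0 ≤ Y)
    (h : x^2 * Y < y^2 * X) : x * Real.sqrt Y < y * Real.sqrt X := by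
  have hR : 0 < y * Real.sqrt X := mul_pos hy (Real.sqrt_pos.mpr hX)
  rcases le_or_gt x 0 with hx | hx
  · calc x * Real.sqrt Y ≤ 0 := mul_nonpos_iff.mpr (Or.inr ⟨hx, Real.sqrt_nonneg Y⟩)
    _ < _ := hR
  · by_contra hcon; push_neg at hcon
    have h1 := mul_self_le_mul_self hR.le hcon
    nlinarith only [h1, Real.sq_sqrt hX.le, Real.sq_sqrt hY, h]

lemma W_downward_aux (a2 α d2 β τ σ' : ℝ) (ha2 : 0 < a2) (hb2 : α < a2) (hc2 : β < d2)
    (hαβ : α ≤ β)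
    (hY1τ : 0 < fY a2 α τ) (hY3τ : 0 < fY d2 β τ)
    (hY1σ : 0 < fY a2 α σ') (hY3σ : 0 < fY d2 β σ')
    (hle : τ ≤ σ') (hW : fW a2 α d2 β σ' < 0) : fW a2 α d2 β τ < 0 := by
  have hτ : 0 < τ := sigma_pos ha2 hY1τ
  have hσ' : 0 < σ' := sigma_pos ha2 hY1σ
  have hr1τ : 0 < Real.sqrt (fY a2 α τ) := Real.sqrt_pos.mpr hY1τ
  have hr3τ : 0 < Real.sqrt (fY d2 β τ) := Real.sqrt_pos.mpr hY3τ
  have hr1σ : 0 < Real.sqrt (fY a2 α σ') := Real.sqrt_pos.mpr hY1σ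
  have hr3σ : 0 < Real.sqrt (fY d2 β σ') := Real.sqrt_pos.mpr hY3σ
  by_cases hτα : τ < α
  · have hτβ : τ < β := lt_of_lt_of_le hτα hαβ
    unfold fW
    have m1 := mul_pos (show (0:ℝ) < (α - τ)/2 by linarith only [hτα]) hr3τ
    have m2 := mul_pos (show (0:ℝ) < (β - τ)/2 by linarith only [hτβ]) hr1τ
    nlinarith only [m1, m2]
  · push_neg at hτα
    have hσα : α ≤ σ' := le_trans hτα hle
    have hσβ : σ' < β := by
      by_contra h; push_neg at h
      have h1 := mul_nonneg (show (0:ℝ) ≤ (σ'-α)/2 by linarith only [hσα])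
        (Real.sqrt_nonneg (fY d2 β σ'))
      have h2 := mul_nonneg (show (0:ℝ) ≤ (σ'-β)/2 by linarith only [h])
        (Real.sqrt_nonneg (fY a2 α σ'))
      unfold fW at hW
      linarith only [h1, h2, hW]
    have hτβ : τ < β := lt_of_le_of_lt hle hσβ
    have hαβ' : α < β := lt_of_le_of_lt hτα hτβ
    obtain ⟨vα, hvα⟩ : ∃ x : ℝ, x = d2*(α-α)^2 - a2*(α-β)^2 - (β-α)*(α^2-α*β) := ⟨_, rfl⟩
    obtain ⟨vβ, hvβ⟩ : ∃ x : ℝ, x = d2*(β-α)^2 - a2*(β-β)^2 - (β-α)*(β^2-α*β) := ⟨_, rfl⟩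
    obtain ⟨vτ, hvτ⟩ : ∃ x : ℝ, x = d2*(τ-α)^2 - a2*(τ-β)^2 - (β-α)*(τ^2-α*β) := ⟨_, rfl⟩
    obtain ⟨vσ, hvσ⟩ : ∃ x : ℝ, x = d2*(σ'-α)^2 - a2*(σ'-β)^2 - (β-α)*(σ'^2-α*β) := ⟨_, rfl⟩
    have hVσ' : vσ < 0 := by
      have h1 : (σ'-α)/2 * Real.sqrt (fY d2 β σ') < (β-σ')/2 * Real.sqrt (fY a2 α σ') := by
        unfold fW at hW; linarith only [hW]
      have hsq : ((σ'-α)/2)^2 * fY d2 β σ' < ((β-σ')/2)^2 * fY a2 α σ' :=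
        sq_ineq_fwd (by linarith only [hσα]) hY1σ.le hY3σ.le h1
      have hid : ((σ'-α)/2)^2 * fY d2 β σ' - ((β-σ')/2)^2 * fY a2 α σ' = σ' * vσ / 4 := by
        rw [hvσ]; unfold fY; ring
      have hsv : σ' * vσ < 0 := by linarith only [hsq, hid]
      by_contra h0; push_neg at h0
      nlinarith only [mul_nonneg hσ'.le h0, hsv]
    have hVα : vα < 0 := by
      have h : vα = (α - a2)*(β-α)^2 := by rw [hvα]; ring
      rw [h]
      exact mul_neg_of_neg_of_pos (by linarith only [hb2]) (pow_pos (sub_pos.mpr hαβ') 2)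
    have hVτ : vτ < 0 := by
      rcases eq_or_lt_of_le hle with heq | hlt
      · rw [hvτ, heq, ← hvσ]; exact hVσ'
      rcases lt_or_ge ((d2-β)-(a2-α)) 0 with hLneg | hLpos
      · have hVβ : 0 < vβ := by
          have h : vβ = (d2-β)*(β-α)^2 := by rw [hvβ]; ring
          rw [h]; exact mul_pos (by linarith only [hc2]) (pow_pos (sub_pos.mpr hαβ') 2)
        by_contra h0; push_neg at h0
        have hid : (β-τ)*vσ = (β-σ')*vτ + (σ'-τ)*vβ
            - ((d2-β)-(a2-α))*(σ'-τ)*(β-σ')*(β-τ) := by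
          rw [hvσ, hvτ, hvβ]; ring
        have t1 : 0 ≤ (β-σ')*vτ := mul_nonneg (by linarith only [hσβ]) h0
        have t2 : 0 < (σ'-τ)*vβ := mul_pos (by linarith only [hlt]) hVβ
        have t3 : ((d2-β)-(a2-α))*(σ'-τ)*(β-σ')*(β-τ) < 0 :=
          mul_neg_of_neg_of_pos (mul_neg_of_neg_of_pos
            (mul_neg_of_neg_of_pos hLneg (by linarith only [hlt]))
            (by linarith only [hσβ])) (by linarith only [hτβ])
        have h5 : (β-τ)*vσ < 0 := mul_neg_of_pos_of_neg (by linarith only [hτβ]) hVσ'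
        linarith only [hid, t1, t2, t3, h5]
      · by_contra h0; push_neg at h0
        have hid : (σ'-α)*vτ = (σ'-τ)*vα + (τ-α)*vσ
            - ((d2-β)-(a2-α))*(τ-α)*(σ'-τ)*(σ'-α) := by
          rw [hvσ, hvτ, hvα]; ring
        have hσ'α : α < σ' := lt_of_le_of_lt hτα hlt
        have t1 : (σ'-τ)*vα < 0 := mul_neg_of_pos_of_neg (by linarith only [hlt]) hVα
        have t2 : (τ-α)*vσ ≤ 0 :=
          mul_nonpos_iff.mpr (Or.inl ⟨by linarith only [hτα], hVσ'.le⟩)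
        have t3 : 0 ≤ ((d2-β)-(a2-α))*(τ-α)*(σ'-τ)*(σ'-α) :=
          mul_nonneg (mul_nonneg (mul_nonneg hLpos (by linarith only [hτα]))
            (by linarith only [hlt])) (by linarith only [hσ'α])
        have h5 : 0 ≤ (σ'-α)*vτ := mul_nonneg (by linarith only [hσ'α]) h0
        linarith only [hid, t1, t2, t3, h5]
    have h2 : ((τ-α)/2)^2 * fY d2 β τ < ((β-τ)/2)^2 * fY a2 α τ := by
      have hid : ((τ-α)/2)^2 * fY d2 β τ - ((β-τ)/2)^2 * fY a2 α τ = τ * vτ / 4 := by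
        rw [hvτ]; unfold fY; ring
      have := mul_pos hτ (show (0:ℝ) < -vτ by linarith only [hVτ])
      nlinarith only [hid, this]
    have h3 : (τ-α)/2 * Real.sqrt (fY d2 β τ) < (β-τ)/2 * Real.sqrt (fY a2 α τ) :=
      sq_ineq_bwd (by linarith only [hτβ]) hY1τ hY3τ.le h2
    unfold fW; linarith only [h3]

lemma W_downward (a2 α d2 β τ σ' : ℝ) (ha2 : 0 < a2) (hd2 : 0 < d2)
    (hb2 : α < a2) (hc2 : β < d2)
    (hY1τ : 0 < fY a2 α τ) (hY3τ : 0 < fY d2 β τ)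
    (hY1σ : 0 < fY a2 α σ') (hY3σ : 0 < fY d2 β σ')
    (hle : τ ≤ σ') (hW : fW a2 α d2 β σ' < 0) : fW a2 α d2 β τ < 0 := by
  rcases le_total α β with h | h
  · exact W_downward_aux a2 α d2 β τ σ' ha2 hb2 hc2 h hY1τ hY3τ hY1σ hY3σ hle hW
  · rw [fW_swap]
    exact W_downward_aux d2 β a2 α τ σ' hd2 hc2 hb2 h hY3τ hY1τ hY3σ hY1σ hle
      (by rwa [← fW_swap])

lemma fY_hasDeriv (m α σ : ℝ) : HasDerivAt (fY m α) (m - (σ+α)/2) σ := by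
  have h1 : HasDerivAt (fun σ:ℝ => σ) 1 σ := hasDerivAt_id σ
  have h3 : HasDerivAt (fun σ:ℝ => (σ+α)/2) (1/2) σ := (h1.add_const α).div_const 2
  have h4 := h3.pow 2
  have h2 : HasDerivAt (fun σ:ℝ => m*σ) (m*1) σ := h1.const_mul m
  have h5 := h2.sub h4
  convert h5 using 1
  · rfl
  · rfl
  · rfl
  ring

lemma fQ_hasDeriv (a2 α d2 β σ : ℝ) (hσ : 0 < σ)
    (hY1 : 0 < fY a2 α σ) (hY3 : 0 < fY d2 β σ) :
    HasDerivAt (fQ a2 α d2 β)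
      ((-(σ^2-α*β)*(Real.sqrt (fY a2 α σ) * Real.sqrt (fY d2 β σ))
        + 2*σ*((a2-(σ+α)/2)*fY d2 β σ + fY a2 α σ*(d2-(σ+β)/2))
        - 4*((Real.sqrt (fY a2 α σ) * Real.sqrt (fY d2 β σ))^2))
       / (2*σ^2*(Real.sqrt (fY a2 α σ) * Real.sqrt (fY d2 β σ)))) σ := by
  have hσne : σ ≠ 0 := ne_of_gt hσ
  have h1 : HasDerivAt (fun σ:ℝ => σ) 1 σ := hasDerivAt_id σ
  have t1 : HasDerivAt (fun σ:ℝ => (σ+α)*(σ+β)) (1*(σ+β)+(σ+α)*1) σ :=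
    (h1.add_const α).mul (h1.add_const β)
  have t2 := t1.div ((h1.const_mul 2)) (by simpa using hσne)
  have t3 := (fY_hasDeriv a2 α σ).mul (fY_hasDeriv d2 β σ)
  have hPpos : 0 < fY a2 α σ * fY d2 β σ := mul_pos hY1 hY3
  have t4 := (Real.hasDerivAt_sqrt (ne_of_gt hPpos)).comp σ t3
  have t5 := (t4.const_mul 2).div h1 hσne
  have t6 := ((hasDerivAt_const σ (a2+d2)).sub t2).add t5
  have heq : fQ a2 α d2 β = fun σ => a2 + d2 - (σ + α) * (σ + β) / (2 * σ)
      + 2 * Real.sqrt (fY a2 α σ * fY d2 β σ) / σ := rfl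
  rw [heq]
  convert t6 using 1
  · rfl
  · rfl
  · rfl
  simp only [Function.comp_apply, Pi.mul_apply]
  rw [Real.sqrt_mul hY1.le]
  have hr1 : Real.sqrt (fY a2 α σ) ≠ 0 := ne_of_gt (Real.sqrt_pos.mpr hY1)
  have hr3 : Real.sqrt (fY d2 β σ) ≠ 0 := ne_of_gt (Real.sqrt_pos.mpr hY3)
  field_simp
  ring

lemma fQ_deriv_pos (a2 α d2 β σ : ℝ) (ha2 : 0 < a2)
    (hY1 : 0 < fY a2 α σ) (hY3 : 0 < fY d2 β σ) (hW : fW a2 α d2 β σ < 0) :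
    0 < deriv (fQ a2 α d2 β) σ := by
  have hσ : 0 < σ := sigma_pos ha2 hY1
  rw [(fQ_hasDeriv a2 α d2 β σ hσ hY1 hY3).deriv]
  have hr1 : 0 < Real.sqrt (fY a2 α σ) := Real.sqrt_pos.mpr hY1
  have hr3 : 0 < Real.sqrt (fY d2 β σ) := Real.sqrt_pos.mpr hY3
  have hr1sq : Real.sqrt (fY a2 α σ) ^ 2 = fY a2 α σ := Real.sq_sqrt hY1.le
  have hr3sq : Real.sqrt (fY d2 β σ) ^ 2 = fY d2 β σ := Real.sq_sqrt hY3.le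
  apply div_pos ?num (by positivity)
  have hsqprod : (Real.sqrt (fY a2 α σ) * Real.sqrt (fY d2 β σ))^2
      = fY a2 α σ * fY d2 β σ := by
    rw [mul_pow, hr1sq, hr3sq]
  rw [hsqprod]
  -- C > 0
  obtain ⟨C, hCdef⟩ : ∃ x : ℝ, x = (σ+α)/2 * Real.sqrt (fY d2 β σ)
      + (σ+β)/2 * Real.sqrt (fY a2 α σ) := ⟨_, rfl⟩
  have hCW : C = σ*(Real.sqrt (fY a2 α σ) + Real.sqrt (fY d2 β σ)) - fW a2 α d2 β σ := by
    rw [hCdef]; unfold fW; ring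
  have hCpos : 0 < C := by
    have h1 : 0 < σ*(Real.sqrt (fY a2 α σ) + Real.sqrt (fY d2 β σ)) :=
      mul_pos hσ (by linarith only [hr1, hr3])
    rw [hCW]; linarith only [h1, hW]
  -- key identity
  have hWC : -2 * (fW a2 α d2 β σ) * C =
      -(σ^2-α*β)*(Real.sqrt (fY a2 α σ) * Real.sqrt (fY d2 β σ))
      - (σ^2-α^2)/2*(Real.sqrt (fY d2 β σ))^2
      - (σ^2-β^2)/2*(Real.sqrt (fY a2 α σ))^2 := by
    rw [hCdef]; unfold fW; ring
  rw [hr1sq, hr3sq] at hWC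
  have hpoly : 2*σ*((a2-(σ+α)/2)*fY d2 β σ + fY a2 α σ*(d2-(σ+β)/2))
      - 4*(fY a2 α σ * fY d2 β σ)
      = - (σ^2-α^2)/2*(fY d2 β σ) - (σ^2-β^2)/2*(fY a2 α σ) := by
    unfold fY; ring
  have hWCpos : 0 < -2 * (fW a2 α d2 β σ) * C :=
    mul_pos (by linarith only [hW]) hCpos
  linarith only [hWC, hpoly, hWCpos]

lemma fY_mid (m α x y z : ℝ) (hx : 0 < fY m α x) (hy : 0 < fY m α y)
    (hxz : x ≤ z) (hzy : z ≤ y) : 0 < fY m α z := by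
  rcases eq_or_lt_of_le hxz with heq | h1
  · rwa [← heq]
  rcases eq_or_lt_of_le hzy with heq | h2
  · rwa [heq]
  have hid : (y-x)*fY m α z - (y-z)*fY m α x - (z-x)*fY m α y
      = (z-x)*(y-z)*(y-x)/4 := by unfold fY; ring
  have hyx : (0:ℝ) < y - x := by linarith only [h1, h2]
  nlinarith only [hid, hx, hy, h1, h2, hyx,
    mul_pos (mul_pos (sub_pos.mpr h1) (sub_pos.mpr h2)) hyx,
    mul_pos (sub_pos.mpr h2) hx, mul_pos (sub_pos.mpr h1) hy]

lemma Dset_convex (a2 α d2 β : ℝ) (ha2 : 0 < a2) (hd2 : 0 < d2)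
    (hb2 : α < a2) (hc2 : β < d2) : Convex ℝ (Dset a2 α d2 β) := by
  rw [convex_iff_ordConnected]
  refine ⟨fun x hx y hy z hz => ?_⟩
  obtain ⟨hA, hB, hC⟩ := hx
  obtain ⟨hA', hB', hC'⟩ := hy
  have h1 : 0 < fY a2 α z := fY_mid a2 α x y z hA hA' hz.1 hz.2
  have h2 : 0 < fY d2 β z := fY_mid d2 β x y z hB hB' hz.1 hz.2
  exact ⟨h1, h2, W_downward a2 α d2 β z y ha2 hd2 hb2 hc2 h1 h2 hA' hB' hz.2 hC'⟩

lemma fY_cont (m α : ℝ) : Continuous (fY m α) := by unfold fY; fun_prop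

lemma Dset_open (a2 α d2 β : ℝ) : IsOpen (Dset a2 α d2 β) := by
  have h1 : IsOpen {σ : ℝ | 0 < fY a2 α σ} := isOpen_lt continuous_const (fY_cont a2 α)
  have h2 : IsOpen {σ : ℝ | 0 < fY d2 β σ} := isOpen_lt continuous_const (fY_cont d2 β)
  have hWc : Continuous (fW a2 α d2 β) := by
    unfold fW
    exact ((continuous_id.sub continuous_const).div_const 2).mul
        (Real.continuous_sqrt.comp (fY_cont d2 β)) |>.add
      (((continuous_id.sub continuous_const).div_const 2).mul
        (Real.continuous_sqrt.comp (fY_cont a2 α)))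
  have h3 : IsOpen {σ : ℝ | fW a2 α d2 β σ < 0} := isOpen_lt hWc continuous_const
  exact (h1.and (h2.and h3) : _)

lemma fQ_mono (a2 α d2 β : ℝ) (ha2 : 0 < a2) (hd2 : 0 < d2)
    (hb2 : α < a2) (hc2 : β < d2) :
    StrictMonoOn (fQ a2 α d2 β) (Dset a2 α d2 β) := by
  apply strictMonoOn_of_deriv_pos (Dset_convex a2 α d2 β ha2 hd2 hb2 hc2)
  · intro x hx
    exact (fQ_hasDeriv a2 α d2 β x (sigma_pos ha2 hx.1) hx.1 hx.2.1
      ).differentiableAt.continuousAt.continuousWithinAt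
  · intro x hx
    rw [(Dset_open a2 α d2 β).interior_eq] at hx
    exact fQ_deriv_pos a2 α d2 β x ha2 hx.1 hx.2.1 hx.2.2

lemma bridge_aux (a2 b2 c2 d2 s q2 x1 x3 y1 y3 : ℝ)
    (hs : 0 < s)
    (h1 : a2*s = x1^2+y1^2) (h2 : b2*s = (x1-s)^2+y1^2)
    (h3 : d2*s = x3^2+y3^2) (h4 : c2*s = (x3-s)^2+y3^2)
    (hq : q2*s = (x1-x3)^2+(y1-y3)^2)
    (hy1 : 0 < y1)
    (hy : y1*y3 < 0)
    (hM : y1*(x1*y3-x3*y1) < 0)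
    (hW : (x1*y3-x3*y1)*(s*(y1-y3)+(x1*y3-x3*y1)) > 0) :
    s ∈ Dset a2 (a2-b2) d2 (d2-c2) ∧ fQ a2 (a2-b2) d2 (d2-c2) s = q2 ∧
    0 < a2 ∧ 0 < d2 ∧ a2-b2 < a2 ∧ d2-c2 < d2 := by
  have hsne : s ≠ 0 := ne_of_gt hs
  have hy3 : y3 < 0 := by
    by_contra h; push_neg at h
    nlinarith [mul_nonneg hy1.le h]
  -- x1, x3 values
  have hx1 : x1 = (s + (a2-b2))/2 := by
    have key : (2*x1 - (s+(a2-b2)))*s = 0 := by linear_combination h2 - h1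
    rcases mul_eq_zero.mp key with h | h
    · linarith
    · exact absurd h hsne
  have hx3 : x3 = (s + (d2-c2))/2 := by
    have key : (2*x3 - (s+(d2-c2)))*s = 0 := by linear_combination h4 - h3
    rcases mul_eq_zero.mp key with h | h
    · linarith
    · exact absurd h hsne
  have hY1 : fY a2 (a2-b2) s = y1^2 := by
    unfold fY; rw [← hx1]; linear_combination h1
  have hY3 : fY d2 (d2-c2) s = y3^2 := by
    unfold fY; rw [← hx3]; linear_combination h3
  have hY1pos : 0 < fY a2 (a2-b2) s := by rw [hY1]; positivity
  have hY3pos : 0 < fY d2 (d2-c2) s := by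
    rw [hY3]; nlinarith only [hy3]
  have hs1 : Real.sqrt (fY a2 (a2-b2) s) = y1 := by
    rw [hY1]; exact Real.sqrt_sq hy1.le
  have hs3 : Real.sqrt (fY d2 (d2-c2) s) = -y3 := by
    rw [hY3, show y3^2 = (-y3)^2 from by ring]
    exact Real.sqrt_sq (by linarith)
  have hM' : x1*y3 - x3*y1 < 0 := by
    by_contra h; push_neg at h
    nlinarith [mul_nonneg hy1.le h]
  have hWs : s*(y1-y3) + (x1*y3-x3*y1) < 0 := by
    by_contra h; push_neg at h
    nlinarith [mul_nonneg (le_of_lt (neg_pos.mpr hM')) h]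
  have hfW : fW a2 (a2-b2) d2 (d2-c2) s < 0 := by
    unfold fW
    rw [hs1, hs3]
    have e : (s-(a2-b2))/2 * (-y3) + (s-(d2-c2))/2 * y1
        = s*(y1-y3) + (x1*y3-x3*y1) := by rw [hx1, hx3]; ring
    linarith [e]
  -- positivity of squared lengths
  have ha2 : 0 < a2 := by nlinarith [sq_nonneg x1]
  have hd2 : 0 < d2 := by nlinarith [sq_nonneg x3, sq_nonneg y3, mul_pos_of_neg_of_neg hy3 hy3]
  have hb2 : 0 < b2 := by nlinarith [sq_nonneg (x1-s)]
  have hc2 : 0 < c2 := by nlinarith [sq_nonneg (x3-s), mul_pos_of_neg_of_neg hy3 hy3]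
  refine ⟨⟨hY1pos, hY3pos, hfW⟩, ?_, ha2, hd2, by linarith, by linarith⟩
  -- fQ value
  unfold fQ
  rw [Real.sqrt_mul hY1pos.le, hs1, hs3]
  have hcomb : q2*s = a2*s + d2*s - 2*(x1*x3) - 2*(y1*y3) := by
    linear_combination hq - h1 - h3
  rw [hx1, hx3] at hcomb
  have hq2 : q2 = (a2*s + d2*s - 2*((s+(a2-b2))/2*((s+(d2-c2))/2)) - 2*(y1*y3))/s := by
    rw [← hcomb]
    field_simp
  rw [hq2]
  field_simp
  ring


lemma bridge (a2 b2 c2 d2 s q2 x1 x3 y1 y3 : ℝ)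
    (hs : 0 < s)
    (h1 : a2*s = x1^2+y1^2) (h2 : b2*s = (x1-s)^2+y1^2)
    (h3 : d2*s = x3^2+y3^2) (h4 : c2*s = (x3-s)^2+y3^2)
    (hq : q2*s = (x1-x3)^2+(y1-y3)^2)
    (hy : y1*y3 < 0)
    (hM : y1*(x1*y3-x3*y1) < 0)
    (hW : (x1*y3-x3*y1)*(s*(y1-y3)+(x1*y3-x3*y1)) > 0) :
    s ∈ Dset a2 (a2-b2) d2 (d2-c2) ∧ fQ a2 (a2-b2) d2 (d2-c2) s = q2 ∧
    0 < a2 ∧ 0 < d2 ∧ a2-b2 < a2 ∧ d2-c2 < d2 := by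
  rcases lt_trichotomy y1 0 with hneg | hzero | hpos
  · exact bridge_aux a2 b2 c2 d2 s q2 x1 x3 (-y1) (-y3) hs
      (by linear_combination h1) (by linear_combination h2)
      (by linear_combination h3) (by linear_combination h4)
      (by linear_combination hq)
      (by linarith)
      (by linarith [show (-y1)*(-y3) = y1*y3 from by ring])
      (by linarith [show (-y1)*(x1*(-y3)-x3*(-y1)) = y1*(x1*y3-x3*y1) from by ring])
      (by linarith [show (x1*(-y3)-x3*(-y1))*(s*((-y1)-(-y3))+(x1*(-y3)-x3*(-y1)))
            = (x1*y3-x3*y1)*(s*(y1-y3)+(x1*y3-x3*y1)) from by ring])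
  · rw [hzero, zero_mul] at hy; exact absurd hy (lt_irrefl 0)
  · exact bridge_aux a2 b2 c2 d2 s q2 x1 x3 y1 y3 hs h1 h2 h3 h4 hq hpos hy hM hW

lemma scalar_main (a2 b2 c2 d2 s s' q2 q2' x1 x3 y1 y3 x1' x3' y1' y3' : ℝ)
    (hs : 0 < s)
    (h1 : a2*s = x1^2+y1^2) (h2 : b2*s = (x1-s)^2+y1^2)
    (h3 : d2*s = x3^2+y3^2) (h4 : c2*s = (x3-s)^2+y3^2)
    (hq : q2*s = (x1-x3)^2+(y1-y3)^2)
    (hy : y1*y3 < 0)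
    (hM : y1*(x1*y3-x3*y1) < 0)
    (hW : (x1*y3-x3*y1)*(s*(y1-y3)+(x1*y3-x3*y1)) > 0)
    (hs' : 0 < s')
    (h1' : a2*s' = x1'^2+y1'^2) (h2' : b2*s' = (x1'-s')^2+y1'^2)
    (h3' : d2*s' = x3'^2+y3'^2) (h4' : c2*s' = (x3'-s')^2+y3'^2)
    (hq' : q2'*s' = (x1'-x3')^2+(y1'-y3')^2)
    (hy' : y1'*y3' < 0)
    (hM' : y1'*(x1'*y3'-x3'*y1') < 0)
    (hW' : (x1'*y3'-x3'*y1')*(s'*(y1'-y3')+(x1'*y3'-x3'*y1')) > 0) :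
    s < s' ↔ q2 < q2' := by
  obtain ⟨hm, hfq, ha2, hd2, hb2, hc2⟩ :=
    bridge a2 b2 c2 d2 s q2 x1 x3 y1 y3 hs h1 h2 h3 h4 hq hy hM hW
  obtain ⟨hm', hfq', _, _, _, _⟩ :=
    bridge a2 b2 c2 d2 s' q2' x1' x3' y1' y3' hs' h1' h2' h3' h4' hq' hy' hM' hW'
  have hiff := (fQ_mono a2 (a2-b2) d2 (d2-c2) ha2 hd2 hb2 hc2).lt_iff_lt hm hm'
  rw [hfq, hfq'] at hiff
  exact hiff.symm

end RScalar

theorem reflex_quad_diagonals (v u : ℕ → E2)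
    (hv : SimpleReflexQuad v) (hu : SimpleReflexQuad u)
    (hlen : ∀ i < 4, dist (v ((i+1) % 4)) (v i) = dist (u ((i+1) % 4)) (u i)) :
    dist (v 2) (v 0) < dist (u 2) (u 0) ↔ dist (v 3) (v 1) < dist (u 3) (u 1) := by
  obtain ⟨x1, x3, y1, y3, hs, h1, h2, h3, h4, hq, hy, hM, hW⟩ := quad_data v hv
  obtain ⟨x1', x3', y1', y3', hs', h1', h2', h3', h4', hq', hy', hM', hW'⟩ := quad_data u hu
  have e0 : dist (v 1) (v 0) = dist (u 1) (u 0) := by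
    have := hlen 0 (by norm_num); norm_num at this; exact this
  have e1 : dist (v 2) (v 1) = dist (u 2) (u 1) := by
    have := hlen 1 (by norm_num); norm_num at this; exact this
  have e2 : dist (v 3) (v 2) = dist (u 3) (u 2) := by
    have := hlen 2 (by norm_num); norm_num at this; exact this
  have e3 : dist (v 0) (v 3) = dist (u 0) (u 3) := by
    have := hlen 3 (by norm_num); norm_num at this; exact this
  rw [← e0] at h1'
  rw [← e1] at h2'
  rw [← e2] at h4'
  rw [← e3] at h3'
  have key := RScalar.scalar_main (dist (v 1) (v 0)^2) (dist (v 2) (v 1)^2)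
    (dist (v 3) (v 2)^2) (dist (v 0) (v 3)^2)
    (dist (v 2) (v 0)^2) (dist (u 2) (u 0)^2)
    (dist (v 3) (v 1)^2) (dist (u 3) (u 1)^2)
    x1 x3 y1 y3 x1' x3' y1' y3'
    hs h1 h2 h3 h4 hq hy hM hW hs' h1' h2' h3' h4' hq' hy' hM' hW'
  have g1 : dist (v 2) (v 0) < dist (u 2) (u 0) ↔
      dist (v 2) (v 0)^2 < dist (u 2) (u 0)^2 :=
    (pow_lt_pow_iff_left₀ dist_nonneg dist_nonneg two_ne_zero).symm
  have g2 : dist (v 3) (v 1) < dist (u 3) (u 1) ↔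
      dist (v 3) (v 1)^2 < dist (u 3) (u 1)^2 :=
    (pow_lt_pow_iff_left₀ dist_nonneg dist_nonneg two_ne_zero).symm
  rw [g1, g2]
  exact key
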